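/- arXiv:0811.3771 — 5 statements merged into one kernel-verified Lean document; each statement's English description precedes it below -/
import Mathlib

section
/- Let n ≥ 1 and let a, b, a', b' ∈ {0,1}^n. Define f(a,b,a',b') = (a·b') + (a'·b) mod 2, where (u,v) = Σ_j u_j v_j mod 2. Then the Pauli strings S_{ab} and S_{a'b'} commute (S_{ab}S_{a'b'} = S_{a'b'}S_{ab}) if f(a,b,a',b') = 0, and anticommute (S_{ab}S_{a'b'} = −S_{a'b'}S_{ab}) if f(a,b,a',b') = 1. -/
open scoped BigOperators

/-- Single-qubit Pauli operator `X^a Z^b`, with indices in `ZMod 2`: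
`(X^a Z^b)_{i j} = δ_{i, j+a} · (-1)^{b·j}`. -/
def pauliXZ (a b : ZMod 2) : Matrix (ZMod 2) (ZMod 2) ℂ :=
  fun i j => if i = j + a then (-1 : ℂ) ^ (b * j).val else 0

/-- Pauli string `S_{ab} = X^{a_1}Z^{b_1} ⊗ ⋯ ⊗ X^{a_n}Z^{b_n}`, realized entrywise
(the Kronecker product of matrices has entries given by products of entries)
on the index set `Fin n → ZMod 2`, of cardinality `2^n`. -/
def pauliString (n : ℕ) (a b : Fin n → ZMod 2) :
    Matrix (Fin n → ZMod 2) (Fin n → ZMod 2) ℂ :=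
  fun i j => ∏ t, pauliXZ (a t) (b t) (i t) (j t)

lemma neg_one_pow_val_add (x y : ZMod 2) :
    ((-1 : ℂ)) ^ (x + y).val = (-1) ^ x.val * (-1) ^ y.val := by
  rw [ZMod.val_add, ← pow_add]
  have hx := ZMod.val_lt x
  have hy := ZMod.val_lt y
  generalize x.val = p at *
  generalize y.val = q at *
  interval_cases p <;> interval_cases q <;> norm_num

lemma neg_one_pow_val_sum {ι : Type*} (s : Finset ι) (f : ι → ZMod 2) :
    ((-1 : ℂ)) ^ ((∑ t ∈ s, f t).val) = ∏ t ∈ s, (-1 : ℂ) ^ ((f t).val) := by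
  induction s using Finset.cons_induction with
  | empty => simp
  | cons i s hi ih => rw [Finset.sum_cons, Finset.prod_cons, neg_one_pow_val_add, ih]

lemma pauliXZ_mul (a b a' b' : ZMod 2) :
    pauliXZ a b * pauliXZ a' b' =
      ((-1 : ℂ) ^ ((a' * b).val)) • pauliXZ (a + a') (b + b') := by
  ext i j
  simp only [Matrix.mul_apply, pauliXZ, Matrix.smul_apply, smul_eq_mul,
    ite_mul, mul_ite, zero_mul, mul_zero]
  rw [Finset.sum_ite_eq' Finset.univ (j + a')]
  simp only [Finset.mem_univ, if_true]
  by_cases h : i = j + (a + a')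
  · have h' : i = j + a' + a := by rw [h]; ring
    rw [if_pos h', if_pos h]
    have e1 : b * (j + a') = a' * b + b * j := by ring
    have e2 : (b + b') * j = b * j + b' * j := by ring
    rw [e1, e2, neg_one_pow_val_add, neg_one_pow_val_add]
    ring
  · have h' : ¬ i = j + a' + a := by rw [show j + a' + a = j + (a + a') by ring]; exact h
    rw [if_neg h', if_neg h]

lemma pauliString_mul (n : ℕ) (a b a' b' : Fin n → ZMod 2) :
    pauliString n a b * pauliString n a' b' =
      ((-1 : ℂ) ^ ((∑ t, a' t * b t).val)) • pauliString n (a + a') (b + b') := by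
  ext i j
  rw [Matrix.mul_apply]
  simp only [pauliString, ← Finset.prod_mul_distrib]
  have hfac : (∏ t, ∑ m : ZMod 2, pauliXZ (a t) (b t) (i t) m * pauliXZ (a' t) (b' t) m (j t))
      = ∑ k : Fin n → ZMod 2, ∏ t,
          pauliXZ (a t) (b t) (i t) (k t) * pauliXZ (a' t) (b' t) (k t) (j t) := by
    rw [Finset.prod_univ_sum, Fintype.piFinset_univ]
  rw [← hfac]
  have : ∀ t : Fin n, (∑ m : ZMod 2, pauliXZ (a t) (b t) (i t) m * pauliXZ (a' t) (b' t) m (j t))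
      = (pauliXZ (a t) (b t) * pauliXZ (a' t) (b' t)) (i t) (j t) := by
    intro t; rw [Matrix.mul_apply]
  rw [Finset.prod_congr rfl (fun t _ => this t)]
  simp only [pauliXZ_mul, Matrix.smul_apply, smul_eq_mul, Finset.prod_mul_distrib]
  rw [neg_one_pow_val_sum]
  congr 1

/-- If `f(a,b,a',b') = (a,b') + (a',b) = 0 (mod 2)` then `S_{ab}` and `S_{a'b'}` commute,
and if `f(a,b,a',b') = 1 (mod 2)` then they anticommute. -/
theorem pauliString_commute_or_anticommute
    (n : ℕ) (hn : 1 ≤ n) (a b a' b' : Fin n → ZMod 2) :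
    ((∑ t, (a t * b' t + a' t * b t)) = 0 →
      pauliString n a b * pauliString n a' b' = pauliString n a' b' * pauliString n a b) ∧
    ((∑ t, (a t * b' t + a' t * b t)) = 1 →
      pauliString n a b * pauliString n a' b' = -(pauliString n a' b' * pauliString n a b)) := by
  have h1 := pauliString_mul n a b a' b'
  have h2 := pauliString_mul n a' b' a b
  rw [show a' + a = a + a' by ring, show b' + b = b + b' by ring] at h2
  have hT : pauliString n (a + a') (b + b') =
      ((-1 : ℂ) ^ ((∑ t, a t * b' t).val)) • (pauliString n a' b' * pauliString n a b) := by
    rw [h2, smul_smul, ← pow_add, ← two_mul, pow_mul]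
    norm_num
  have key : pauliString n a b * pauliString n a' b' =
      ((-1 : ℂ) ^ (((∑ t, (a t * b' t + a' t * b t))).val)) •
        (pauliString n a' b' * pauliString n a b) := by
    rw [h1, hT, smul_smul]
    congr 1
    rw [← neg_one_pow_val_add, Finset.sum_add_distrib, add_comm]
  constructor
  · intro h
    rw [key, h]
    simp
  · intro h
    rw [key, h]
    rw [show (1 : ZMod 2).val = 1 from rfl, pow_one, neg_one_smul]
end

section
/- Let n ≥ 1 and let Γ_1, …, Γ_m be pairwise distinct 2^n×2^n complex matrices such that each Γ_j is Hermitian with Γ_j² = I, and Γ_j Γ_k = −Γ_k Γ_j whenever j ≠ k. Then m ≤ 2n + 1. -/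
lemma aux_comm {N m : ℕ} (Γ : Fin m → Matrix (Fin N) (Fin N) ℂ)
    (hanti : ∀ j k, j ≠ k → Γ j * Γ k = -(Γ k * Γ j))
    (j : Fin m) (l : List (Fin m)) :
    Γ j * (l.map Γ).prod =
      ((-1 : ℂ) ^ (l.filter (fun a => a ≠ j)).length) • ((l.map Γ).prod * Γ j) := by
  induction l with
  | nil => simp
  | cons a t ih =>
    simp only [List.map_cons, List.prod_cons, List.filter_cons]
    by_cases haj : a = j
    · subst haj
      rw [if_neg (by simp)]
      calc Γ a * (Γ a * (t.map Γ).prod)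
          = Γ a * (((-1 : ℂ) ^ (t.filter (fun x => x ≠ a)).length) • ((t.map Γ).prod * Γ a)) := by
            rw [ih]
        _ = ((-1 : ℂ) ^ (t.filter (fun x => x ≠ a)).length) • (Γ a * (t.map Γ).prod * Γ a) := by
            rw [mul_smul_comm, mul_assoc]
    · have h1 : Γ j * Γ a = -(Γ a * Γ j) := hanti j a (fun h => haj h.symm)
      rw [if_pos (by simp [haj])]
      simp only [List.length_cons]
      calc Γ j * (Γ a * (t.map Γ).prod) = (Γ j * Γ a) * (t.map Γ).prod := by rw [mul_assoc]
        _ = -(Γ a * (Γ j * (t.map Γ).prod)) := by rw [h1]; simp [mul_assoc]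
        _ = -(Γ a * (((-1 : ℂ) ^ (t.filter (fun x => x ≠ j)).length) • ((t.map Γ).prod * Γ j))) := by
            rw [ih]
        _ = ((-1 : ℂ) ^ ((t.filter (fun x => x ≠ j)).length + 1)) • (Γ a * (t.map Γ).prod * Γ j) := by
            rw [mul_smul_comm, pow_succ]
            simp [mul_assoc, smul_smul]

lemma aux_sq {N m : ℕ} (Γ : Fin m → Matrix (Fin N) (Fin N) ℂ)
    (hsq : ∀ j, Γ j * Γ j = 1)
    (hanti : ∀ j k, j ≠ k → Γ j * Γ k = -(Γ k * Γ j))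
    (l : List (Fin m)) :
    ∃ ε : ℂ, (ε = 1 ∨ ε = -1) ∧ (l.map Γ).prod * (l.map Γ).prod = ε • 1 := by
  induction l with
  | nil => exact ⟨1, Or.inl rfl, by simp⟩
  | cons a t ih =>
    obtain ⟨ε, hε, he⟩ := ih
    set k := (t.filter (fun x => x ≠ a)).length with hk
    refine ⟨(-1) ^ k * ε, ?_, ?_⟩
    · rcases hε with h | h <;> rcases Nat.even_or_odd k with hk | hk <;>
        simp [h, hk.neg_one_pow]
    · have hc : (t.map Γ).prod * Γ a = ((-1 : ℂ) ^ k) • (Γ a * (t.map Γ).prod) := by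
        rw [aux_comm Γ hanti a t, smul_smul, ← pow_add, ← two_mul, pow_mul]
        simp
      calc (Γ a * (t.map Γ).prod) * (Γ a * (t.map Γ).prod)
          = Γ a * ((t.map Γ).prod * Γ a) * (t.map Γ).prod := by simp [mul_assoc]
        _ = ((-1 : ℂ) ^ k) • (Γ a * Γ a * (t.map Γ).prod * (t.map Γ).prod) := by
            rw [hc, mul_smul_comm, smul_mul_assoc]
            congr 1
            simp [mul_assoc]
        _ = ((-1 : ℂ) ^ k) • ((t.map Γ).prod * (t.map Γ).prod) := by
            rw [hsq a, one_mul]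
        _ = ((-1) ^ k * ε) • (1 : Matrix (Fin N) (Fin N) ℂ) := by rw [he, smul_smul]

lemma aux_trace_zero {N : ℕ} {M A : Matrix (Fin N) (Fin N) ℂ} (hA : A * A = 1)
    (h : A * M = -(M * A)) : M.trace = 0 := by
  have h1 : M.trace = -(M.trace) := by
    conv_lhs => rw [show M = A * A * M from by rw [hA, one_mul], mul_assoc]
    rw [Matrix.trace_mul_comm, h]
    simp [Matrix.trace_mul_comm, mul_assoc, hA]
  linear_combination h1 / 2

lemma aux_len_notmem {m : ℕ} {S : Finset (Fin m)} {j : Fin m} (h : j ∉ S) :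
    ((S.sort (· ≤ ·)).filter (fun x => x ≠ j)).length = S.card := by
  rw [List.filter_eq_self.mpr, Finset.length_sort]
  intro a ha
  simp only [Finset.mem_sort] at ha
  simp only [decide_eq_true_eq]
  exact fun hx => h (hx ▸ ha)

lemma aux_len_mem {m : ℕ} {S : Finset (Fin m)} {j : Fin m} (h : j ∈ S) :
    ((S.sort (· ≤ ·)).filter (fun x => x ≠ j)).length + 1 = S.card := by
  have h1 := List.length_eq_countP_add_countP (p := fun x => decide (x ≠ j)) (l := S.sort (· ≤ ·))
  have h2 : (S.sort (· ≤ ·)).countP (fun a => ¬(decide (a ≠ j) = true)) =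
      (S.sort (· ≤ ·)).count j := by
    rw [List.count]
    congr 1
    funext a
    by_cases hx : a = j <;> simp [hx]
  have h3 : (S.sort (· ≤ ·)).count j = 1 :=
    List.count_eq_one_of_mem (S.sort_nodup _) (Finset.mem_sort _ |>.mpr h)
  rw [← List.countP_eq_length_filter, Finset.length_sort] at *
  omega

lemma aux_trace_ne {N m : ℕ} (Γ : Fin m → Matrix (Fin N) (Fin N) ℂ)
    (hsq : ∀ j, Γ j * Γ j = 1)
    (hanti : ∀ j k, j ≠ k → Γ j * Γ k = -(Γ k * Γ j))
    {S T : Finset (Fin m)} (hne : S ≠ T) (j0 : Fin m) (hj0S : j0 ∉ S) (hj0T : j0 ∉ T) :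
    (((S.sort (· ≤ ·)).map Γ).prod * ((T.sort (· ≤ ·)).map Γ).prod).trace = 0 := by
  set a : Fin m → ℕ := fun j => ((S.sort (· ≤ ·)).filter (fun x => x ≠ j)).length with ha
  set b : Fin m → ℕ := fun j => ((T.sort (· ≤ ·)).filter (fun x => x ≠ j)).length with hb
  have key : ∃ j, Odd (a j + b j) := by
    rcases Nat.even_or_odd (S.card + T.card) with hpar | hpar
    · obtain ⟨c, hc⟩ := hpar
      have hss : ¬ S ⊆ T ∨ ¬ T ⊆ S := by
        by_contra h
        push_neg at h
        exact hne (Finset.Subset.antisymm h.1 h.2)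
      rcases hss with h | h
      · obtain ⟨j, hjS, hjT⟩ := Finset.not_subset.mp h
        have e1 := aux_len_mem (S := S) hjS
        have e2 := aux_len_notmem (S := T) hjT
        exact ⟨j, c - 1, by simp only [ha, hb]; omega⟩
      · obtain ⟨j, hjT, hjS⟩ := Finset.not_subset.mp h
        have e1 := aux_len_notmem (S := S) hjS
        have e2 := aux_len_mem (S := T) hjT
        exact ⟨j, c - 1, by simp only [ha, hb]; omega⟩
    · obtain ⟨c, hc⟩ := hpar
      have e1 := aux_len_notmem (S := S) hj0S
      have e2 := aux_len_notmem (S := T) hj0T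
      exact ⟨j0, c, by simp only [ha, hb]; omega⟩
  obtain ⟨j, hodd⟩ := key
  set PS := ((S.sort (· ≤ ·)).map Γ).prod
  set PT := ((T.sort (· ≤ ·)).map Γ).prod
  have hM : Γ j * (PS * PT) = -((PS * PT) * Γ j) := by
    calc Γ j * (PS * PT) = (Γ j * PS) * PT := by rw [mul_assoc]
      _ = ((-1 : ℂ) ^ a j) • (PS * (Γ j * PT)) := by
          rw [aux_comm Γ hanti j, smul_mul_assoc, mul_assoc]
      _ = ((-1 : ℂ) ^ a j) • (PS * (((-1 : ℂ) ^ b j) • (PT * Γ j))) := by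
          rw [aux_comm Γ hanti j]
      _ = ((-1 : ℂ) ^ (a j + b j)) • (PS * PT * Γ j) := by
          rw [mul_smul_comm, smul_smul, ← pow_add, mul_assoc]
      _ = -((PS * PT) * Γ j) := by rw [hodd.neg_one_pow, neg_smul, one_smul]
  exact aux_trace_zero (hsq j) hM

lemma aux_trace_diag {N m : ℕ} (hN : N ≠ 0) (Γ : Fin m → Matrix (Fin N) (Fin N) ℂ)
    (hsq : ∀ j, Γ j * Γ j = 1)
    (hanti : ∀ j k, j ≠ k → Γ j * Γ k = -(Γ k * Γ j))
    (S : Finset (Fin m)) :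
    (((S.sort (· ≤ ·)).map Γ).prod * ((S.sort (· ≤ ·)).map Γ).prod).trace ≠ 0 := by
  obtain ⟨ε, hε, he⟩ := aux_sq Γ hsq hanti (S.sort (· ≤ ·))
  rw [he]
  have : (ε • (1 : Matrix (Fin N) (Fin N) ℂ)).trace = ε * N := by
    simp [Matrix.trace_smul, Matrix.trace_one]
  rw [this]
  have hNc : (N : ℂ) ≠ 0 := Nat.cast_ne_zero.mpr hN
  rcases hε with h | h <;> simp [h, hNc]

/-- Any family of pairwise distinct, pairwise anticommuting Hermitian involutions
on `ℂ^(2^n)` has at most `2n + 1` members. -/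
theorem card_anticommuting_hermitian_involutions_le
    (n m : ℕ) (hn : 1 ≤ n)
    (Γ : Fin m → Matrix (Fin (2 ^ n)) (Fin (2 ^ n)) ℂ)
    (hdist : Function.Injective Γ)
    (hherm : ∀ j, (Γ j).IsHermitian)
    (hsq : ∀ j, Γ j * Γ j = 1)
    (hanti : ∀ j k, j ≠ k → Γ j * Γ k = -(Γ k * Γ j)) :
    m ≤ 2 * n + 1 := by
  rcases m with _ | k
  · omega
  have hN : 2 ^ n ≠ 0 := by positivity
  set emb : Fin k ↪ Fin (k + 1) := ⟨Fin.succ, Fin.succ_injective k⟩ with hemb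
  set F : Finset (Fin k) → Matrix (Fin (2 ^ n)) (Fin (2 ^ n)) ℂ :=
    fun S => (((S.map emb).sort (· ≤ ·)).map Γ).prod with hF
  have hzero : ∀ (S : Finset (Fin k)), (0 : Fin (k + 1)) ∉ S.map emb := by
    intro S h
    obtain ⟨x, _, hx⟩ := Finset.mem_map.mp h
    exact Fin.succ_ne_zero x hx
  have hli : LinearIndependent ℂ F := by
    rw [Fintype.linearIndependent_iff]
    intro g hg T
    have h1 : ((∑ S, g S • F S) * F T).trace = 0 := by
      rw [hg, Matrix.zero_mul, Matrix.trace_zero]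
    rw [Finset.sum_mul, Matrix.trace_sum] at h1
    have h2 : ∀ S ∈ Finset.univ, S ≠ T → ((g S • F S) * F T).trace = 0 := by
      intro S _ hST
      rw [smul_mul_assoc, Matrix.trace_smul]
      have hne : S.map emb ≠ T.map emb := fun h => hST (Finset.map_injective emb h)
      rw [aux_trace_ne Γ hsq hanti hne 0 (hzero S) (hzero T), smul_zero]
    rw [Finset.sum_eq_single_of_mem T (Finset.mem_univ T) h2] at h1
    rw [smul_mul_assoc, Matrix.trace_smul, smul_eq_mul, mul_eq_zero] at h1
    rcases h1 with h | h
    · exact h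
    · exact absurd h (aux_trace_diag hN Γ hsq hanti (T.map emb))
  have hcard := hli.fintype_card_le_finrank
  rw [Fintype.card_finset, Fintype.card_fin, Module.finrank_matrix] at hcard
  simp only [Fintype.card_fin, Module.finrank_self, mul_one] at hcard
  have h2 : 2 ^ k ≤ 2 ^ (n + n) := by rwa [pow_add]
  have := (Nat.pow_le_pow_iff_right (by norm_num : 1 < 2)).mp h2
  omega
end

section
/- Let d ≥ 1, let Γ_1, …, Γ_m be d×d complex Hermitian matrices with Γ_j² = I for all j and Γ_j Γ_k = −Γ_k Γ_j for all j ≠ k, and let ρ be a d×d positive semidefinite Hermitian matrix with Tr(ρ) = 1. Then Σ_{j=1}^m (Tr(Γ_j ρ))² ≤ 1. -/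
open scoped BigOperators ComplexOrder
open Matrix

lemma psd_trace_nonneg {d : ℕ} {M : Matrix (Fin d) (Fin d) ℂ} (h : M.PosSemidef) :
    0 ≤ M.trace := by
  rw [Matrix.trace]
  apply Finset.sum_nonneg
  intro i _
  exact h.diag_nonneg

/-- The uncertainty relation for anti-commuting observables: if `Γ_1, …, Γ_m` are
Hermitian involutions that pairwise anticommute, and `ρ` is a state (a positive
semidefinite matrix of trace 1), then `Σ_j (Tr(Γ_j ρ))² ≤ 1`.  (The trace
`Tr(Γ_j ρ)` is real since `Γ_j` and `ρ` are Hermitian, so we take its real part.) -/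
theorem uncertainty_relation_anticommuting_observables
    (d m : ℕ) (hd : 1 ≤ d)
    (Γ : Fin m → Matrix (Fin d) (Fin d) ℂ)
    (hherm : ∀ j, (Γ j).IsHermitian)
    (hsq : ∀ j, Γ j * Γ j = 1)
    (hanti : ∀ j k, j ≠ k → Γ j * Γ k = -(Γ k * Γ j))
    (ρ : Matrix (Fin d) (Fin d) ℂ)
    (hρ : ρ.PosSemidef) (htr : ρ.trace = 1) :
    ∑ j, ((Γ j * ρ).trace.re) ^ 2 ≤ 1 := by
  set c : Fin m → ℝ := fun j => ((Γ j * ρ).trace.re) with hc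
  have hreal : ∀ j, ((Γ j * ρ).trace) = (c j : ℂ) := by
    intro j
    have h1 : (starRingEnd ℂ) ((Γ j * ρ).trace) = (Γ j * ρ).trace := by
      have : ((Γ j * ρ)ᴴ).trace = star ((Γ j * ρ).trace) := Matrix.trace_conjTranspose _
      rw [Matrix.conjTranspose_mul, (hherm j).eq, hρ.1.eq, Matrix.trace_mul_comm] at this
      exact this.symm
    exact (Complex.conj_eq_iff_re.mp h1).symm
  set s : ℝ := ∑ j, (c j) ^ 2 with hs
  set A : Matrix (Fin d) (Fin d) ℂ := ∑ j, (c j : ℂ) • Γ j with hA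
  have hAherm : Aᴴ = A := by
    rw [hA, Matrix.conjTranspose_sum]
    refine Finset.sum_congr rfl fun j _ => ?_
    rw [Matrix.conjTranspose_smul, (hherm j).eq]
    simp
  have hA2 : A * A = (s : ℂ) • 1 := by
    have hexp : A * A = ∑ j, ∑ k, ((c j : ℂ) * (c k : ℂ)) • (Γ j * Γ k) := by
      rw [hA, Finset.sum_mul]
      refine Finset.sum_congr rfl fun j _ => ?_
      rw [Finset.mul_sum]
      refine Finset.sum_congr rfl fun k _ => ?_
      rw [Matrix.smul_mul, Matrix.mul_smul, smul_smul]
    have hswap : A * A = ∑ j, ∑ k, ((c j : ℂ) * (c k : ℂ)) • (Γ k * Γ j) := by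
      rw [hexp, Finset.sum_comm]
      refine Finset.sum_congr rfl fun j _ => Finset.sum_congr rfl fun k _ => ?_
      rw [mul_comm]
    have hdouble : A * A + A * A = ∑ j, ∑ k,
        ((c j : ℂ) * (c k : ℂ)) • (Γ j * Γ k + Γ k * Γ j) := by
      calc A * A + A * A
          = (∑ j, ∑ k, ((c j : ℂ) * (c k : ℂ)) • (Γ j * Γ k))
            + ∑ j, ∑ k, ((c j : ℂ) * (c k : ℂ)) • (Γ k * Γ j) := by rw [← hexp, ← hswap]
        _ = _ := by
            rw [← Finset.sum_add_distrib]
            refine Finset.sum_congr rfl fun j _ => ?_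
            rw [← Finset.sum_add_distrib]
            refine Finset.sum_congr rfl fun k _ => ?_
            rw [smul_add]
    have hinner : ∀ j : Fin m, ∑ k, ((c j : ℂ) * (c k : ℂ)) • (Γ j * Γ k + Γ k * Γ j)
        = ((2 : ℂ) * (c j : ℂ) ^ 2) • (1 : Matrix (Fin d) (Fin d) ℂ) := by
      intro j
      rw [Finset.sum_eq_single j]
      · rw [hsq j]
        module
      · intro k _ hk
        rw [hanti j k (by exact fun h => hk (h ▸ rfl))]
        simp
      · intro h; exact absurd (Finset.mem_univ j) h
    have h2 : A * A + A * A = ((2 : ℂ) * (s : ℂ)) • 1 := by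
      rw [hdouble]
      rw [Finset.sum_congr rfl fun j _ => hinner j]
      rw [← Finset.sum_smul]
      congr 1
      rw [← Finset.mul_sum, hs]
      push_cast
      ring
    have := h2
    rw [← two_smul ℂ (A * A)] at this
    have h3 : (2 : ℂ) • (A * A) = (2 : ℂ) • ((s : ℂ) • (1 : Matrix (Fin d) (Fin d) ℂ)) := by
      rw [this, smul_smul]
    exact smul_right_injective _ (two_ne_zero) h3
  have htrA : (A * ρ).trace = (s : ℂ) := by
    rw [hA, Finset.sum_mul, Matrix.trace_sum]
    have : ∀ j : Fin m, (((c j : ℂ) • Γ j) * ρ).trace = ((c j : ℂ)) ^ 2 := by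
      intro j
      rw [Matrix.smul_mul, Matrix.trace_smul, hreal j, smul_eq_mul]
      ring
    rw [Finset.sum_congr rfl fun j _ => this j, hs]
    push_cast
    ring
  -- the PSD matrix (A - s•1) ρ (A - s•1)ᴴ has nonneg trace
  set M : Matrix (Fin d) (Fin d) ℂ := A - (s : ℂ) • 1 with hM
  have hMherm : Mᴴ = M := by
    rw [hM, Matrix.conjTranspose_sub, hAherm, Matrix.conjTranspose_smul]
    simp
  have hpsd : (M * ρ * Mᴴ).PosSemidef := hρ.mul_mul_conjTranspose_same M
  have htrM : (M * ρ * Mᴴ).trace = ((s - s ^ 2 : ℝ) : ℂ) := by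
    rw [hMherm, hM]
    have expand : (A - (s : ℂ) • 1) * ρ * (A - (s : ℂ) • 1)
        = A * ρ * A - (s : ℂ) • (A * ρ) - (s : ℂ) • (ρ * A) + ((s : ℂ) * (s : ℂ)) • ρ := by
      simp only [Matrix.sub_mul, Matrix.mul_sub, Matrix.smul_mul, Matrix.mul_smul,
        Matrix.one_mul, Matrix.mul_one, smul_smul]
      module
    rw [expand]
    have t1 : (A * ρ * A).trace = (s : ℂ) := by
      rw [Matrix.trace_mul_cycle, hA2, Matrix.smul_mul, Matrix.one_mul,
        Matrix.trace_smul, htr, smul_eq_mul, mul_one]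
    have t2 : (ρ * A).trace = (s : ℂ) := by rw [Matrix.trace_mul_comm, htrA]
    rw [Matrix.trace_add, Matrix.trace_sub, Matrix.trace_sub, Matrix.trace_smul,
      Matrix.trace_smul, Matrix.trace_smul, t1, t2, htrA, htr]
    simp only [smul_eq_mul]
    push_cast
    ring
  have hnn : (0 : ℝ) ≤ s - s ^ 2 := by
    have := psd_trace_nonneg hpsd
    rw [htrM] at this
    exact_mod_cast this
  have hs0 : 0 ≤ s := Finset.sum_nonneg fun j _ => sq_nonneg _
  show s ≤ 1
  nlinarith [hnn, hs0]
end

section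
/- Let p ≥ 1 be a real number and let m_1, m_2, m_3, m_4 be real numbers satisfying |m_1|^p + |m_2|^p ≤ 1, |m_1|^p + |m_3|^p ≤ 1, |m_2|^p + |m_4|^p ≤ 1, and |m_3|^p + |m_4|^p ≤ 1. Then m_1 + m_2 + m_3 − m_4 ≤ 4 · 2^{−1/p}. Moreover, equality is attained at m_1 = m_2 = m_3 = 2^{−1/p}, m_4 = −2^{−1/p}. -/
lemma pair_bound (p a b : ℝ) (hp : 1 ≤ p) (h : |a| ^ p + |b| ^ p ≤ 1) :
    a + b ≤ 2 * (2 : ℝ) ^ (-(1 / p)) := by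
  have hp0 : (0 : ℝ) < p := lt_of_lt_of_le one_pos hp
  set X : ℝ := (|a| + |b|) / 2 with hX
  have hX0 : 0 ≤ X := by positivity
  have hconv := (convexOn_rpow hp).2 (x := |a|) (y := |b|)
    (abs_nonneg a) (abs_nonneg b) (by norm_num : (0:ℝ) ≤ 1/2)
    (by norm_num : (0:ℝ) ≤ 1/2) (by norm_num)
  simp only [smul_eq_mul] at hconv
  have hXp : X ^ p ≤ 1 / 2 := by
    have : X ^ p ≤ (1/2) * |a| ^ p + (1/2) * |b| ^ p := by
      have : X = 1/2 * |a| + 1/2 * |b| := by ring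
      rw [this]; exact hconv
    nlinarith
  have hfin : X ≤ (2 : ℝ) ^ (-(1 / p)) := by
    have h1 : (X ^ p) ^ (1 / p) ≤ ((1:ℝ)/2) ^ (1 / p) :=
      Real.rpow_le_rpow (by positivity) hXp (by positivity)
    have h2 : (X ^ p) ^ (1 / p) = X := by
      rw [← Real.rpow_mul hX0, mul_one_div_cancel hp0.ne', Real.rpow_one]
    have h3 : ((1:ℝ)/2) ^ (1 / p) = (2 : ℝ) ^ (-(1 / p)) := by
      rw [Real.rpow_neg (by norm_num), one_div, Real.inv_rpow (by norm_num)]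
    rw [h2, h3] at h1; exact h1
  calc a + b ≤ |a| + |b| := add_le_add (le_abs_self a) (le_abs_self b)
    _ = 2 * X := by rw [hX]; ring
    _ ≤ 2 * (2 : ℝ) ^ (-(1 / p)) := by linarith

/-- The maximal CHSH value in a `p`-theory: if the four expectation values satisfy
the relaxed `p`-norm uncertainty constraints `|m_i|^p + |m_j|^p ≤ 1` for each
anticommuting pair, then `m₁ + m₂ + m₃ − m₄ ≤ 4·2^{−1/p}`; equality is attained at
`m₁ = m₂ = m₃ = 2^{−1/p}`, `m₄ = −2^{−1/p}`.  (Here `^` on reals is `Real.rpow`.) -/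
theorem chsh_bound_p_theory
    (p : ℝ) (hp : 1 ≤ p) (m₁ m₂ m₃ m₄ : ℝ)
    (h12 : |m₁| ^ p + |m₂| ^ p ≤ 1) (h13 : |m₁| ^ p + |m₃| ^ p ≤ 1)
    (h24 : |m₂| ^ p + |m₄| ^ p ≤ 1) (h34 : |m₃| ^ p + |m₄| ^ p ≤ 1) :
    m₁ + m₂ + m₃ - m₄ ≤ 4 * (2 : ℝ) ^ (-(1 / p)) ∧
    (|(2 : ℝ) ^ (-(1 / p))| ^ p + |(2 : ℝ) ^ (-(1 / p))| ^ p ≤ 1 ∧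
     |(2 : ℝ) ^ (-(1 / p))| ^ p + |(2 : ℝ) ^ (-(1 / p))| ^ p ≤ 1 ∧
     |(2 : ℝ) ^ (-(1 / p))| ^ p + |-((2 : ℝ) ^ (-(1 / p)))| ^ p ≤ 1 ∧
     |(2 : ℝ) ^ (-(1 / p))| ^ p + |-((2 : ℝ) ^ (-(1 / p)))| ^ p ≤ 1 ∧
     (2 : ℝ) ^ (-(1 / p)) + (2 : ℝ) ^ (-(1 / p)) + (2 : ℝ) ^ (-(1 / p)) -
       (-((2 : ℝ) ^ (-(1 / p)))) = 4 * (2 : ℝ) ^ (-(1 / p))) := by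
  have hp0 : (0 : ℝ) < p := lt_of_lt_of_le one_pos hp
  have hc : |(2 : ℝ) ^ (-(1 / p))| ^ p = 1 / 2 := by
    rw [abs_of_pos (Real.rpow_pos_of_pos two_pos _),
      ← Real.rpow_mul (by norm_num : (0:ℝ) ≤ 2), neg_mul, one_div,
      inv_mul_cancel₀ hp0.ne', Real.rpow_neg_one]
    norm_num
  constructor
  · have A := pair_bound p m₁ m₂ hp h12
    have B := pair_bound p m₃ (-m₄) hp (by rwa [abs_neg])
    linarith
  · rw [hc, abs_neg, hc]
    refine ⟨by norm_num, by norm_num, by norm_num, by norm_num, by ring⟩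
end

section
/- Let n ≥ 1, let λ be a real number with 0 ≤ λ ≤ 1, and let x : {1,2,3}^n → {0,1} be any function. For each measurement choice k ∈ {1,2,3}^n and each outcome A ∈ {−1,1}^n, define p_x(A|k) = (1/2^n)(1 + λ (−1)^{x(k)} Π_{i=1}^n A_i). Then: (i) p_x(A|k) ≥ 0 for all A, k; (ii) Σ_{A ∈ {−1,1}^n} p_x(A|k) = 1 for every k; and (iii) for every k, Σ_{A : Π_i A_i = (−1)^{x(k)}} p_x(A|k) = (1+λ)/2. In particular, for λ = 1 every bit is recovered with probability 1, yielding a [3^n, n, 1]-random access code. -/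
open scoped BigOperators

lemma sign_mem {n : ℕ} (A : Fin n → Bool) :
    (∏ i, (if A i then (-1 : ℝ) else 1)) = 1 ∨
    (∏ i, (if A i then (-1 : ℝ) else 1)) = -1 := by
  refine Finset.prod_induction _ (fun r => r = 1 ∨ r = -1) ?_ (Or.inl rfl) ?_
  · rintro a b (rfl | rfl) (rfl | rfl) <;> norm_num
  · intro i _; by_cases h : A i <;> simp [h]

lemma sign_sum_zero {n : ℕ} (hn : 1 ≤ n) :
    ∑ A : Fin n → Bool, (∏ i, (if A i then (-1 : ℝ) else 1)) = 0 := by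
  have := (Fintype.prod_sum (ι := Fin n) (κ := fun _ => Bool)
    (fun _ b => if b then (-1 : ℝ) else 1)).symm
  rw [this]
  have : ∀ i : Fin n, (∑ b : Bool, (if b then (-1 : ℝ) else 1)) = 0 := by simp
  rw [Finset.prod_congr rfl (fun i _ => this i)]
  have : (0 : ℕ) < n := hn
  simp [Finset.prod_const, zero_pow (by omega : n ≠ 0)]

/-- The superstrong random access code in (`p`-)GNST: encoding a string
`x : {1,2,3}ⁿ → {0,1}` into the `n`-gbit state
`p_x(A|k) = (1/2ⁿ)(1 + λ (−1)^{x(k)} Π_i A_i)`.  Outcomes in `{−1,1}` are encoded by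
`Bool` (`true ↦ −1` appearing as the sign `(−1)^{x(k)}`; outcome tuples `A` as
`Fin n → Bool` with `A_i = if A i then −1 else 1`).  The state is (i) nonnegative,
(ii) normalized, and (iii) measuring `k` recovers the bit `x(k)` with probability
`(1+λ)/2`; in particular for `λ = 1` every bit is recovered with probability 1,
yielding a `[3ⁿ, n, 1]`-random access code. -/
theorem gnst_random_access_code
    (n : ℕ) (hn : 1 ≤ n) (lam : ℝ) (hlam0 : 0 ≤ lam) (hlam1 : lam ≤ 1)
    (x : (Fin n → Fin 3) → Bool)
    (px : (Fin n → Bool) → (Fin n → Fin 3) → ℝ)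
    (hpx : ∀ A k, px A k =
      (1 / 2 ^ n) * (1 + lam * (if x k then -1 else 1) *
        ∏ i, (if A i then (-1 : ℝ) else 1))) :
    (∀ A k, 0 ≤ px A k) ∧
    (∀ k, ∑ A : Fin n → Bool, px A k = 1) ∧
    (∀ k, ∑ A ∈ Finset.univ.filter
        (fun A : Fin n → Bool =>
          (∏ i, (if A i then (-1 : ℝ) else 1)) = (if x k then -1 else 1)),
        px A k = (1 + lam) / 2) ∧
    (lam = 1 → ∀ k, ∑ A ∈ Finset.univ.filter
        (fun A : Fin n → Bool =>
          (∏ i, (if A i then (-1 : ℝ) else 1)) = (if x k then -1 else 1)),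
        px A k = 1) := by
  set σ : (Fin n → Bool) → ℝ := fun A => ∏ i, (if A i then (-1 : ℝ) else 1) with hσ
  have hcardF : (Finset.univ : Finset (Fin n → Bool)).card = 2 ^ n := by
    simp [Finset.card_univ]
  -- nonnegativity
  have h1 : ∀ A k, 0 ≤ px A k := by
    intro A k
    rw [hpx]
    have hs : (if x k then (-1 : ℝ) else 1) = 1 ∨ (if x k then (-1 : ℝ) else 1) = -1 := by
      by_cases h : x k <;> simp [h]
    have hσA := sign_mem A
    have : 0 ≤ 1 + lam * (if x k then (-1:ℝ) else 1) * ∏ i, (if A i then (-1:ℝ) else 1) := by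
      rcases hs with hs | hs <;> rcases hσA with hA | hA <;> rw [hs, hA] <;> nlinarith
    positivity
  -- normalization
  have h2 : ∀ k, ∑ A : Fin n → Bool, px A k = 1 := by
    intro k
    have : ∑ A : Fin n → Bool, px A k
        = (1 / 2 ^ n) * ∑ A : Fin n → Bool,
          (1 + lam * (if x k then (-1:ℝ) else 1) * ∏ i, (if A i then (-1:ℝ) else 1)) := by
      rw [Finset.mul_sum]; exact Finset.sum_congr rfl fun A _ => hpx A k
    rw [this, Finset.sum_add_distrib, ← Finset.mul_sum, sign_sum_zero hn]
    simp [hcardF]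
  -- the filter card
  have key : ∀ k, ((Finset.univ.filter
      (fun A : Fin n → Bool => σ A = (if x k then (-1:ℝ) else 1))).card : ℝ) = 2 ^ (n-1) := by
    intro k
    set s : ℝ := if x k then (-1:ℝ) else 1 with hsdef
    have hs : s = 1 ∨ s = -1 := by by_cases h : x k <;> simp [hsdef, h]
    set F := Finset.univ.filter (fun A : Fin n → Bool => σ A = s) with hF
    set G := Finset.univ.filter (fun A : Fin n → Bool => ¬ (σ A = s)) with hG
    have hGσ : ∀ A ∈ G, σ A = -s := by
      intro A hA
      rw [hG, Finset.mem_filter] at hA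
      have hA2 : σ A ≠ s := hA.2
      have hσA : σ A = 1 ∨ σ A = -1 := sign_mem A
      rcases hσA with h | h <;> rcases hs with h' | h'
      · exact absurd (h.trans h'.symm) hA2
      · rw [h, h', neg_neg]
      · rw [h, h']
      · exact absurd (h.trans h'.symm) hA2
    have hsum0 : ∑ A : Fin n → Bool, σ A = 0 := sign_sum_zero hn
    have hsplit : ∑ A ∈ F, σ A + ∑ A ∈ G, σ A = 0 := by
      rw [hF, hG, Finset.sum_filter_add_sum_filter_not]; exact hsum0
    have hFs : ∑ A ∈ F, σ A = (F.card : ℝ) * s := by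
      rw [Finset.sum_congr rfl (fun A hA => (Finset.mem_filter.mp hA).2),
        Finset.sum_const, nsmul_eq_mul]
    have hGs : ∑ A ∈ G, σ A = (G.card : ℝ) * (-s) := by
      rw [Finset.sum_congr rfl hGσ, Finset.sum_const, nsmul_eq_mul]
    have hcards : F.card + G.card = 2 ^ n := by
      rw [hF, hG, Finset.card_filter_add_card_filter_not, hcardF]
    have hsne : s ≠ 0 := by rcases hs with h | h <;> rw [h] <;> norm_num
    have hFG : (F.card : ℝ) = (G.card : ℝ) := by
      have : ((F.card : ℝ) - G.card) * s = 0 := by rw [sub_mul]; linarith [hsplit, hFs, hGs]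
      have := mul_eq_zero.mp this
      rcases this with h | h
      · linarith [sub_eq_zero.mp h]
      · exact absurd h hsne
    have hFcard : F.card = 2 ^ (n - 1) := by
      have hFGn : F.card = G.card := Nat.cast_injective hFG
      have : F.card + F.card = 2 ^ n := by rw [hFGn] at hcards ⊢; omega
      have h2n : 2 ^ n = 2 * 2 ^ (n - 1) := by
        rw [← pow_succ']
        congr 1
        omega
      omega
    rw [hFcard]
    push_cast
    ring
  have h3 : ∀ k, ∑ A ∈ Finset.univ.filter
      (fun A : Fin n → Bool => σ A = (if x k then (-1:ℝ) else 1)),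
      px A k = (1 + lam) / 2 := by
    intro k
    set s : ℝ := if x k then (-1:ℝ) else 1 with hsdef
    have hs2 : s * s = 1 := by by_cases h : x k <;> simp [hsdef, h]
    have hconst : ∀ A ∈ Finset.univ.filter (fun A : Fin n → Bool => σ A = s),
        px A k = (1 / 2 ^ n) * (1 + lam) := by
      intro A hA
      have hAs := (Finset.mem_filter.mp hA).2
      rw [hpx]
      have : (∏ i, (if A i then (-1:ℝ) else 1)) = s := hAs
      rw [this]
      congr 1
      nlinarith [hs2]
    rw [Finset.sum_congr rfl hconst, Finset.sum_const, nsmul_eq_mul, key k]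
    have h2n : (2:ℝ) ^ n = 2 * 2 ^ (n - 1) := by
      rw [← pow_succ']
      congr 1
      omega
    rw [h2n]
    field_simp
  exact ⟨h1, h2, h3, fun hl k => by rw [h3 k, hl]; norm_num⟩
end
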